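/- Let v be a non-decreasing submodular function on a finite set M, let X = {x_1, …, x_k}, Y1 = {y¹_1,…,y¹_{τ1}} and Y2 = {y²_1,…,y²_{τ2}} be subsets of M with τ1, τ2 ≤ k, such that for every ℓ ∈ {1,2} and every r ≤ τ_ℓ, v(x_r | {x_1,…,x_{r−1}}) ≥ v(yℓ_r | {x_1,…,x_{r−1}}). Then v(Y1 ∪ Y2) ≤ 3·v(X). -/
import Mathlib

/-- The set `{x_1, …, x_{r−1}}` of goods indexed strictly below `r`. -/
def prefixSet {G : Type*} [DecidableEq G] {k : ℕ} (x : Fin k → G) (r : Fin k) : Finset G :=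
  (Finset.univ.filter fun j => j < r).image x

lemma nwf_aux {G : Type*} [DecidableEq G] (v : Finset G → ℝ)
    (hmono : ∀ S T : Finset G, S ⊆ T → v S ≤ v T)
    (hsub : ∀ S T : Finset G, ∀ g, S ⊆ T → g ∉ T →
      v (insert g T) - v T ≤ v (insert g S) - v S)
    (X : Finset G) (T : Finset G) :
    v (X ∪ T) ≤ v X + ∑ g ∈ T, (v (insert g X) - v X) := by
  induction T using Finset.induction_on with
  | empty => simp
  | @insert a T ha ih =>
    rw [Finset.sum_insert ha]
    have hmarg : 0 ≤ v (insert a X) - v X := by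
      have := hmono X (insert a X) (Finset.subset_insert _ _); linarith
    by_cases h : a ∈ X ∪ T
    · have he : X ∪ insert a T = X ∪ T := by
        rw [Finset.union_insert, Finset.insert_eq_self.mpr h]
      rw [he]; linarith
    · have h1 : v (insert a (X ∪ T)) - v (X ∪ T) ≤ v (insert a X) - v X :=
        hsub X (X ∪ T) a Finset.subset_union_left h
      have he : X ∪ insert a T = insert a (X ∪ T) := by rw [Finset.union_insert]
      rw [he]; linarith

theorem submodular_third_bound {G : Type*} [DecidableEq G] (v : Finset G → ℝ)
    (hnn : ∀ S, 0 ≤ v S) (hz : v ∅ = 0)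
    (hmono : ∀ S T : Finset G, S ⊆ T → v S ≤ v T)
    (hsub : ∀ S T : Finset G, ∀ g, S ⊆ T → g ∉ T →
      v (insert g T) - v T ≤ v (insert g S) - v S)
    {k τ₁ τ₂ : ℕ} (hτ₁ : τ₁ ≤ k) (hτ₂ : τ₂ ≤ k)
    (x : Fin k → G) (y₁ : Fin τ₁ → G) (y₂ : Fin τ₂ → G)
    (hx : Function.Injective x)
    (hy₁ : Function.Injective y₁) (hy₂ : Function.Injective y₂)
    (h₁ : ∀ r : Fin τ₁,
      v (insert (y₁ r) (prefixSet x (Fin.castLE hτ₁ r))) - v (prefixSet x (Fin.castLE hτ₁ r)) ≤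
        v (insert (x (Fin.castLE hτ₁ r)) (prefixSet x (Fin.castLE hτ₁ r))) -
          v (prefixSet x (Fin.castLE hτ₁ r)))
    (h₂ : ∀ r : Fin τ₂,
      v (insert (y₂ r) (prefixSet x (Fin.castLE hτ₂ r))) - v (prefixSet x (Fin.castLE hτ₂ r)) ≤
        v (insert (x (Fin.castLE hτ₂ r)) (prefixSet x (Fin.castLE hτ₂ r))) -
          v (prefixSet x (Fin.castLE hτ₂ r))) :
    v (Finset.univ.image y₁ ∪ Finset.univ.image y₂) ≤ 3 * v (Finset.univ.image x) := by
  classical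
  set X : Finset G := Finset.univ.image x with hX
  -- prefix sets as a function of a natural number
  set P : ℕ → Finset G := fun n => (Finset.univ.filter fun j : Fin k => (j : ℕ) < n).image x
    with hPdef
  have hP0 : P 0 = ∅ := by simp [hPdef]
  have hPk : P k = X := by
    simp only [hPdef, hX]
    congr 1
    apply Finset.filter_true_of_mem
    intro j _
    exact j.isLt
  have hPsub : ∀ m n : ℕ, m ≤ n → P m ⊆ P n := by
    intro m n hmn
    apply Finset.image_subset_image
    intro j hj
    simp only [Finset.mem_filter, Finset.mem_univ, true_and] at hj ⊢
    exact lt_of_lt_of_le hj hmn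
  have hPX : ∀ n, P n ⊆ X := by
    intro n
    rw [hX]
    exact Finset.image_subset_image (Finset.filter_subset _ _)
  have hPsucc : ∀ r : Fin k, insert (x r) (P (r : ℕ)) = P ((r : ℕ) + 1) := by
    intro r
    ext g
    simp only [hPdef, Finset.mem_insert, Finset.mem_image, Finset.mem_filter, Finset.mem_univ,
      true_and]
    constructor
    · rintro (rfl | ⟨j, hj, rfl⟩)
      · exact ⟨r, Nat.lt_succ_self _, rfl⟩
      · exact ⟨j, Nat.lt_succ_of_lt hj, rfl⟩
    · rintro ⟨j, hj, rfl⟩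
      rcases Nat.lt_succ_iff_lt_or_eq.mp hj with h | h
      · exact Or.inr ⟨j, h, rfl⟩
      · left; congr 1; exact Fin.ext h
  have hprefix : ∀ r : Fin k, prefixSet x r = P (r : ℕ) := by
    intro r
    rfl
  -- marginals are nonnegative
  have hmargnn : ∀ n : ℕ, 0 ≤ v (P (n + 1)) - v (P n) := by
    intro n
    have := hmono (P n) (P (n + 1)) (hPsub n (n + 1) (Nat.le_succ n))
    linarith
  -- telescoping partial sum bound
  have htel : ∀ τ : ℕ, τ ≤ k →
      (∑ r ∈ Finset.range τ, (v (P (r + 1)) - v (P r))) ≤ v X := by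
    intro τ hτ
    have hfull : (∑ r ∈ Finset.range k, (v (P (r + 1)) - v (P r))) = v X := by
      rw [Finset.sum_range_sub (fun i => v (P i)) k, hPk, hP0, hz, sub_zero]
    calc (∑ r ∈ Finset.range τ, (v (P (r + 1)) - v (P r)))
        ≤ ∑ r ∈ Finset.range k, (v (P (r + 1)) - v (P r)) := by
          apply Finset.sum_le_sum_of_subset_of_nonneg
          · exact Finset.range_subset_range.mpr hτ
          · intro i _ _; exact hmargnn i
      _ = v X := hfull
  -- marginal at X is nonnegative
  have hmX : ∀ g : G, 0 ≤ v (insert g X) - v X := by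
    intro g
    have := hmono X (insert g X) (Finset.subset_insert _ _)
    linarith
  -- key per-element bound
  have hkey : ∀ {τ : ℕ} (hτ : τ ≤ k) (y : Fin τ → G),
      (∀ r : Fin τ,
        v (insert (y r) (prefixSet x (Fin.castLE hτ r))) - v (prefixSet x (Fin.castLE hτ r)) ≤
          v (insert (x (Fin.castLE hτ r)) (prefixSet x (Fin.castLE hτ r))) -
            v (prefixSet x (Fin.castLE hτ r))) →
      ∀ r : Fin τ, v (insert (y r) X) - v X ≤ v (P ((r : ℕ) + 1)) - v (P (r : ℕ)) := by
    intro τ hτ y hy r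
    have hc : ((Fin.castLE hτ r : Fin k) : ℕ) = (r : ℕ) := rfl
    have hpre : prefixSet x (Fin.castLE hτ r) = P (r : ℕ) := by
      rw [hprefix (Fin.castLE hτ r), hc]
    have hstep : v (insert (y r) (P (r : ℕ))) - v (P (r : ℕ)) ≤
        v (P ((r : ℕ) + 1)) - v (P (r : ℕ)) := by
      have := hy r
      rw [hpre] at this
      have h2 : insert (x (Fin.castLE hτ r)) (P (r : ℕ)) = P ((r : ℕ) + 1) := by
        have := hPsucc (Fin.castLE hτ r)
        rwa [hc] at this
      rw [h2] at this
      exact this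
    by_cases hmem : y r ∈ X
    · have : insert (y r) X = X := Finset.insert_eq_self.mpr hmem
      rw [this, sub_self]
      have := hmono (P (r : ℕ)) (insert (y r) (P (r : ℕ))) (Finset.subset_insert _ _)
      linarith
    · have := hsub (P (r : ℕ)) X (y r) (hPX (r : ℕ)) hmem
      linarith
  -- sum bound for each y family
  have hsumy : ∀ {τ : ℕ} (hτ : τ ≤ k) (y : Fin τ → G) (hyinj : Function.Injective y),
      (∀ r : Fin τ,
        v (insert (y r) (prefixSet x (Fin.castLE hτ r))) - v (prefixSet x (Fin.castLE hτ r)) ≤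
          v (insert (x (Fin.castLE hτ r)) (prefixSet x (Fin.castLE hτ r))) -
            v (prefixSet x (Fin.castLE hτ r))) →
      (∑ g ∈ Finset.univ.image y, (v (insert g X) - v X)) ≤ v X := by
    intro τ hτ y hyinj hy
    rw [Finset.sum_image (fun a _ b _ h => hyinj h)]
    calc (∑ r : Fin τ, (v (insert (y r) X) - v X))
        ≤ ∑ r : Fin τ, (v (P ((r : ℕ) + 1)) - v (P (r : ℕ))) :=
          Finset.sum_le_sum fun r _ => hkey hτ y hy r
      _ = ∑ r ∈ Finset.range τ, (v (P (r + 1)) - v (P r)) :=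
          Fin.sum_univ_eq_sum_range (fun i => v (P (i + 1)) - v (P i)) τ
      _ ≤ v X := htel τ hτ
  set Y : Finset G := Finset.univ.image y₁ ∪ Finset.univ.image y₂ with hY
  have h1 : v Y ≤ v (X ∪ Y) := hmono Y (X ∪ Y) Finset.subset_union_right
  have h2 : v (X ∪ Y) ≤ v X + ∑ g ∈ Y, (v (insert g X) - v X) :=
    nwf_aux v hmono hsub X Y
  have h3 : (∑ g ∈ Y, (v (insert g X) - v X)) ≤
      (∑ g ∈ Finset.univ.image y₁, (v (insert g X) - v X)) +
      (∑ g ∈ Finset.univ.image y₂, (v (insert g X) - v X)) := by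
    rw [hY]
    have := Finset.sum_union_inter (s₁ := Finset.univ.image y₁) (s₂ := Finset.univ.image y₂)
      (f := fun g => v (insert g X) - v X)
    have hnn' : 0 ≤ ∑ g ∈ (Finset.univ.image y₁ ∩ Finset.univ.image y₂),
        (v (insert g X) - v X) := Finset.sum_nonneg fun g _ => hmX g
    linarith
  have hb1 := hsumy hτ₁ y₁ hy₁ h₁
  have hb2 := hsumy hτ₂ y₂ hy₂ h₂
  have : v Y ≤ 3 * v X := by linarith
  simpa [hY, hX] using this
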